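/- Let p be an odd prime and C ⊆ F_{p^m}^N an additive code with Construction A lattice Λ(C) and symmetric unimodular integer Gram matrix g with entries w_{i,t,j,s} reducing mod p to the Gram matrix of a symmetric F_p-bilinear form β. Then Λ(C) is even with respect to b(λ,λ') = λ g λ'^T if and only if β(c,c) = 0 for all c ∈ C and all diagonal entries w_{i,t,i,t} of g are even. -/

import Mathlib

open scoped BigOperators

noncomputable section

/-- Construction A lattice of an additive code over `F_{p^m}`: expand codeword coordinates
in the basis `e`, lift the `F_p`-coefficients to integers, and scale by `1/√p`. -/
def latticeF (p m N : ℕ) [Fact p.Prime]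
    (e : Module.Basis (Fin m) (ZMod p) (GaloisField p m))
    (C : Set (Fin N → GaloisField p m)) : Set (Fin N × Fin m → ℝ) :=
  { lam | ∃ c ∈ C, ∃ l : Fin N × Fin m → ℤ, ∀ x : Fin N × Fin m,
      lam x = (((e.repr (c x.1) x.2).val : ℝ) + p * l x) / Real.sqrt p }

/-- Bilinear form on `ℝ^{Nm}` given by an integer Gram matrix `g`. -/
def bForm {N m : ℕ} (g : Matrix (Fin N × Fin m) (Fin N × Fin m) ℤ)
    (lam lam' : Fin N × Fin m → ℝ) : ℝ :=
  ∑ x, ∑ y, lam x * (g x y : ℝ) * lam' y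

/-- The quadratic form of a symmetric integer matrix with even diagonal is even. -/
lemma even_quad {X : Type*} [Fintype X] [DecidableEq X]
    (g : Matrix X X ℤ) (hs : g.IsSymm) (hd : ∀ x, Even (g x x)) (v : X → ℤ) :
    Even (∑ x, ∑ y, v x * g x y * v y) := by
  have h2 : ((∑ x, ∑ y, v x * g x y * v y : ℤ) : ZMod 2) = 0 := by
    push_cast
    rw [← Finset.sum_product']
    rw [← Finset.diag_union_offDiag (Finset.univ : Finset X),
      Finset.sum_union (Finset.disjoint_diag_offDiag _)]
    have hdiag : ∑ q ∈ (Finset.univ : Finset X).diag,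
        ((v q.1 : ZMod 2) * (g q.1 q.2 : ZMod 2) * (v q.2 : ZMod 2)) = 0 := by
      rw [Finset.sum_diag]
      refine Finset.sum_eq_zero fun x _ => ?_
      have : ((g x x : ℤ) : ZMod 2) = 0 := by
        rw [ZMod.intCast_zmod_eq_zero_iff_dvd]
        exact (hd x).two_dvd
      rw [this]; ring
    have hoff : ∑ q ∈ (Finset.univ : Finset X).offDiag,
        ((v q.1 : ZMod 2) * (g q.1 q.2 : ZMod 2) * (v q.2 : ZMod 2)) = 0 := by
      refine Finset.sum_involution (fun q _ => (q.2, q.1)) ?_ ?_ ?_ ?_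
      · intro q hq
        have hsym : g q.2 q.1 = g q.1 q.2 := hs.apply q.1 q.2
        rw [hsym]
        have : ∀ a : ZMod 2, a + a = 0 := by decide
        rw [show (v q.2 : ZMod 2) * (g q.1 q.2 : ZMod 2) * (v q.1 : ZMod 2)
            = (v q.1 : ZMod 2) * (g q.1 q.2 : ZMod 2) * (v q.2 : ZMod 2) by ring]
        exact this _
      · intro q hq hne
        simp only [Finset.mem_offDiag] at hq
        intro h
        exact hq.2.2 (congrArg Prod.fst h).symm
      · intro q hq
        simp only [Finset.mem_offDiag] at hq ⊢
        exact ⟨Finset.mem_univ _, Finset.mem_univ _, fun h => hq.2.2 h.symm⟩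
      · intro q hq; rfl
    rw [hdiag, hoff, add_zero]
  rw [ZMod.intCast_zmod_eq_zero_iff_dvd] at h2
  exact even_iff_two_dvd.mpr (by exact_mod_cast h2)

/-- Value of the Gram bilinear form on a lattice vector, as an integer divided by `p`. -/
lemma bForm_eq {N m : ℕ} (p : ℕ) (hp : 0 < p)
    (g : Matrix (Fin N × Fin m) (Fin N × Fin m) ℤ)
    (r l : Fin N × Fin m → ℤ) (lam : Fin N × Fin m → ℝ)
    (h : ∀ x, lam x = ((r x : ℝ) + p * l x) / Real.sqrt p) :
    bForm g lam lam
      = ((∑ x, ∑ y, (r x + p * l x) * g x y * (r y + p * l y) : ℤ) : ℝ) / p := by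
  have hsq : Real.sqrt p * Real.sqrt p = (p : ℝ) :=
    Real.mul_self_sqrt (by positivity)
  unfold bForm
  push_cast
  rw [Finset.sum_div]
  refine Finset.sum_congr rfl fun x _ => ?_
  rw [Finset.sum_div]
  refine Finset.sum_congr rfl fun y _ => ?_
  rw [h x, h y]
  rw [div_mul_eq_mul_div, div_mul_div_comm, hsq]

/-- The integer quadratic form of the lift reduces mod `p` to `β c c`. -/
lemma quad_cast (p m N : ℕ) [Fact p.Prime]
    (e : Module.Basis (Fin m) (ZMod p) (GaloisField p m))
    (g : Matrix (Fin N × Fin m) (Fin N × Fin m) ℤ)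
    (β : (Fin N → GaloisField p m) →ₗ[ZMod p]
          (Fin N → GaloisField p m) →ₗ[ZMod p] ZMod p)
    (hcompat : ∀ (i j : Fin N) (t s : Fin m),
      ((g (i, t) (j, s) : ZMod p)) = β (Pi.single i (e t)) (Pi.single j (e s)))
    (hs : g.IsSymm) (c : Fin N → GaloisField p m) :
    ((∑ x : Fin N × Fin m, ∑ y : Fin N × Fin m,
        ((e.repr (c x.1) x.2).val : ℤ) * g x y * ((e.repr (c y.1) y.2).val : ℤ) : ℤ)
      : ZMod p) = β c c := by
  have hc : c = ∑ x : Fin N × Fin m,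
      (e.repr (c x.1) x.2) • (Pi.single x.1 (e x.2) : Fin N → GaloisField p m) := by
    funext j
    rw [Fintype.sum_prod_type]
    simp only [Finset.sum_apply, Pi.smul_apply, Pi.single_apply, smul_ite, smul_zero]
    rw [Finset.sum_comm]
    simp only [Finset.sum_ite_eq, Finset.mem_univ, if_true]
    exact (e.sum_repr (c j)).symm
  conv_rhs => rw [hc]
  simp only [map_sum, map_smul, LinearMap.sum_apply, LinearMap.smul_apply,
    Finset.smul_sum, smul_eq_mul, ← hcompat]
  push_cast
  refine Finset.sum_congr rfl fun x _ => ?_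
  rw [Finset.mul_sum]
  refine Finset.sum_congr rfl fun y _ => ?_
  simp only [ZMod.natCast_val, ZMod.cast_id]
  rw [show ((y.1, y.2) : Fin N × Fin m) = y from rfl,
    show ((x.1, x.2) : Fin N × Fin m) = x from rfl, show g y x = g x y from hs.apply x y]
  ring

/-- Expansion of the quadratic form at `r + P·l`. -/
lemma quad_expand {X : Type*} [Fintype X] (g : Matrix X X ℤ) (hs : g.IsSymm)
    (P : ℤ) (r l : X → ℤ) :
    ∑ x, ∑ y, (r x + P * l x) * g x y * (r y + P * l y)
      = (∑ x, ∑ y, r x * g x y * r y) + 2 * P * (∑ x, ∑ y, r x * g x y * l y)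
        + P ^ 2 * (∑ x, ∑ y, l x * g x y * l y) := by
  have hM : (∑ x, ∑ y, l x * g x y * r y) = ∑ x, ∑ y, r x * g x y * l y := by
    rw [Finset.sum_comm]
    refine Finset.sum_congr rfl fun y _ => Finset.sum_congr rfl fun x _ => ?_
    rw [show g x y = g y x from hs.apply y x]
    ring
  have hterm : ∀ x y : X, (r x + P * l x) * g x y * (r y + P * l y)
      = r x * g x y * r y + P * (r x * g x y * l y) + P * (l x * g x y * r y)
        + P ^ 2 * (l x * g x y * l y) := fun x y => by ring
  simp_rw [hterm, Finset.sum_add_distrib, ← Finset.mul_sum]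
  rw [hM]; ring

theorem latticeF_even_iff_p_odd (p m N : ℕ) [Fact p.Prime] (hodd : Odd p)
    (e : Module.Basis (Fin m) (ZMod p) (GaloisField p m))
    (C : AddSubgroup (Fin N → GaloisField p m))
    (g : Matrix (Fin N × Fin m) (Fin N × Fin m) ℤ)
    (hg_symm : g.IsSymm) (hg_uni : IsUnit g.det)
    (β : (Fin N → GaloisField p m) →ₗ[ZMod p]
          (Fin N → GaloisField p m) →ₗ[ZMod p] ZMod p)
    (hβ_symm : ∀ c c', β c c' = β c' c)
    (hcompat : ∀ (i j : Fin N) (t s : Fin m),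
      ((g (i, t) (j, s) : ZMod p)) = β (Pi.single i (e t)) (Pi.single j (e s))) :
    (∀ lam ∈ latticeF p m N e (C : Set _), ∃ z : ℤ, bForm g lam lam = 2 * z) ↔
      ((∀ c ∈ C, β c c = 0) ∧ ∀ x : Fin N × Fin m, Even (g x x)) := by
  have hp : 0 < p := (Fact.out : p.Prime).pos
  have hpR : (p : ℝ) ≠ 0 := by exact_mod_cast hp.ne'
  constructor
  · intro h
    constructor
    · -- β c c = 0 for all codewords
      intro c hc
      set r : Fin N × Fin m → ℤ := fun x => ((e.repr (c x.1) x.2).val : ℤ) with hr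
      set lam : Fin N × Fin m → ℝ := fun x =>
        (((e.repr (c x.1) x.2).val : ℝ) + (p : ℝ) * (((0 : ℤ) : ℝ))) / Real.sqrt p
        with hlam
      have hmem : lam ∈ latticeF p m N e (C : Set _) :=
        ⟨c, hc, fun _ => 0, fun x => rfl⟩
      obtain ⟨z, hz⟩ := h lam hmem
      rw [bForm_eq p hp g r (fun _ => 0) lam (fun x => by rw [hlam]; simp only [hr]; push_cast; ring)] at hz
      have hQ : (∑ x, ∑ y, (r x + (p : ℤ) * (0 : ℤ)) * g x y * (r y + (p : ℤ) * (0 : ℤ)))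
          = ∑ x, ∑ y, r x * g x y * r y := by
        simp
      rw [hQ] at hz
      have hz' : (∑ x, ∑ y, r x * g x y * r y) = 2 * z * p := by
        have : ((∑ x, ∑ y, r x * g x y * r y : ℤ) : ℝ) = 2 * z * p := by
          field_simp at hz
          push_cast at hz ⊢; linarith [hz]
        exact_mod_cast this
      have := quad_cast p m N e g β hcompat hg_symm c
      rw [hz'] at this
      rw [← this]
      push_cast
      simp [ZMod.natCast_self]
    · -- even diagonal
      intro x
      set lam : Fin N × Fin m → ℝ := fun u =>
        (((e.repr ((0 : Fin N → GaloisField p m) u.1) u.2).val : ℝ)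
          + (p : ℝ) * (((Pi.single x 1 : Fin N × Fin m → ℤ) u : ℝ))) / Real.sqrt p
        with hlam
      have hmem : lam ∈ latticeF p m N e (C : Set _) :=
        ⟨0, C.zero_mem, Pi.single x 1, fun u => rfl⟩
      obtain ⟨z, hz⟩ := h lam hmem
      set r : Fin N × Fin m → ℤ :=
        fun u => ((e.repr ((0 : Fin N → GaloisField p m) u.1) u.2).val : ℤ) with hr
      rw [bForm_eq p hp g r (Pi.single x 1) lam
        (fun u => by rw [hlam]; simp only [hr]; push_cast; ring)] at hz
      have hr0 : ∀ u, r u = 0 := by intro u; simp [hr]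
      have hQ : (∑ u, ∑ v, (r u + (p : ℤ) * (Pi.single x 1 : Fin N × Fin m → ℤ) u)
            * g u v * (r v + (p : ℤ) * (Pi.single x 1 : Fin N × Fin m → ℤ) v))
          = (p : ℤ) ^ 2 * g x x := by
        simp_rw [hr0, zero_add]
        rw [Finset.sum_eq_single x]
        · rw [Finset.sum_eq_single x]
          · simp [Pi.single_eq_same]; ring
          · intro v _ hv; simp [Pi.single_eq_of_ne hv]
          · intro hx; exact absurd (Finset.mem_univ x) hx
        · intro u _ hu; simp [Pi.single_eq_of_ne hu]
        · intro hx; exact absurd (Finset.mem_univ x) hx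
      rw [hQ] at hz
      have hz' : (p : ℤ) * g x x = 2 * z := by
        have : (((p : ℤ) ^ 2 * g x x : ℤ) : ℝ) = 2 * z * p := by
          field_simp at hz
          push_cast at hz ⊢; linarith [hz]
        have h2 : ((p : ℤ) ^ 2 * g x x : ℤ) = 2 * z * p := by exact_mod_cast this
        have := mul_right_cancel₀ (a := (p : ℤ) * g x x) (b := (p : ℤ)) (c := 2 * z)
          (by exact_mod_cast hp.ne') (by linarith [h2] <;> ring_nf)
        exact this
      have hpodd : Odd ((p : ℤ)) := by exact_mod_cast hodd
      have heven : Even ((p : ℤ) * g x x) := ⟨z, by omega⟩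
      rcases Int.even_mul.mp heven with h1 | h1
      · exact absurd h1 (by simpa [Int.not_even_iff_odd] using hpodd)
      · exact h1
  · rintro ⟨hβ0, hdiag⟩ lam hmem
    obtain ⟨c, hc, l, hl⟩ := hmem
    set r : Fin N × Fin m → ℤ := fun x => ((e.repr (c x.1) x.2).val : ℤ) with hr
    rw [bForm_eq p hp g r l lam (fun x => by rw [hl x]; simp only [hr]; push_cast; ring)]
    rw [quad_expand g hg_symm (p : ℤ) r l]
    set R : ℤ := ∑ x, ∑ y, r x * g x y * r y with hR
    set M : ℤ := ∑ x, ∑ y, r x * g x y * l y with hM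
    set L : ℤ := ∑ x, ∑ y, l x * g x y * l y with hL
    have hpdvd : (p : ℤ) ∣ R := by
      have hcast := quad_cast p m N e g β hcompat hg_symm c
      rw [hβ0 c hc] at hcast
      exact_mod_cast (ZMod.intCast_zmod_eq_zero_iff_dvd R p).mp hcast
    obtain ⟨k, hk⟩ := hpdvd
    have hRe : Even R := even_quad g hg_symm hdiag r
    have hpodd : Odd ((p : ℤ)) := by exact_mod_cast hodd
    have hke : Even k := by
      rw [hk] at hRe
      rcases Int.even_mul.mp hRe with h1 | h1
      · exact absurd h1 (by simpa [Int.not_even_iff_odd] using hpodd)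
      · exact h1
    have hLe : Even L := even_quad g hg_symm hdiag l
    obtain ⟨k', hk'⟩ := hke
    obtain ⟨L', hL'⟩ := hLe
    refine ⟨k' + M + p * L', ?_⟩
    have key : R + 2 * (p : ℤ) * M + (p : ℤ) ^ 2 * L
        = (p : ℤ) * (2 * (k' + M + p * L')) := by
      rw [hk, hk', hL']; ring
    rw [key]
    push_cast
    field_simp
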